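/- Let λ, μ, ν > 0. With ∇ the unique ℝ-bilinear map satisfying the Koszul formula for (V, h, [·,·]) and R(A,B)C := ∇_A(∇_B C) − ∇_B(∇_A C) − ∇_{[A,B]} C, the Lorentzian Berger sphere satisfies h(R(X,Y)Y, X) = ((λ²+μ²−ν²)² + 4ν²(μ²−ν²))/(λμν)², h(R(X,Z)Z, X) = ((λ²−μ²+ν²)² − 4μ²(μ²−ν²))/(λμν)², and h(R(Y,Z)Z, Y) = ((λ²+μ²+ν²)² + 2(λ⁴−μ⁴−ν⁴))/(λμν)². -/
import Mathlib


/-- The Lorentzian scalar product on `ℝ³` with `h(X,X) = −1`, `h(Y,Y) = h(Z,Z) = 1`. -/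
def hLor (v w : Fin 3 → ℝ) : ℝ := -(v 0 * w 0) + v 1 * w 1 + v 2 * w 2

set_option maxHeartbeats 1000000 in
theorem sectional_curvature_lorentzian_berger_sphere
    (l m n : ℝ) (hl : 0 < l) (hm : 0 < m) (hn : 0 < n)
    (X Y Z : Fin 3 → ℝ) (hX : X = ![1, 0, 0]) (hY : Y = ![0, 1, 0]) (hZ : Z = ![0, 0, 1])
    (bracket : (Fin 3 → ℝ) →ₗ[ℝ] (Fin 3 → ℝ) →ₗ[ℝ] (Fin 3 → ℝ))
    (halt : ∀ v, bracket v v = 0)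
    (hXY : bracket X Y = (2 * n / (l * m)) • Z)
    (hZX : bracket Z X = (2 * m / (l * n)) • Y)
    (hYZ : bracket Y Z = (2 * l / (m * n)) • X)
    (nabla : (Fin 3 → ℝ) →ₗ[ℝ] (Fin 3 → ℝ) →ₗ[ℝ] (Fin 3 → ℝ))
    (hKoszul : ∀ A B C, 2 * hLor (nabla A B) C =
      hLor C (bracket A B) + hLor B (bracket C A) - hLor A (bracket B C))
    (R : (Fin 3 → ℝ) → (Fin 3 → ℝ) → (Fin 3 → ℝ) → (Fin 3 → ℝ))
    (hR : ∀ A B C, R A B C = nabla A (nabla B C) - nabla B (nabla A C) - nabla (bracket A B) C) :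
    hLor (R X Y Y) X = ((l ^ 2 + m ^ 2 - n ^ 2) ^ 2 + 4 * n ^ 2 * (m ^ 2 - n ^ 2)) / (l * m * n) ^ 2 ∧
    hLor (R X Z Z) X = ((l ^ 2 - m ^ 2 + n ^ 2) ^ 2 - 4 * m ^ 2 * (m ^ 2 - n ^ 2)) / (l * m * n) ^ 2 ∧
    hLor (R Y Z Z) Y = ((l ^ 2 + m ^ 2 + n ^ 2) ^ 2 + 2 * (l ^ 4 - m ^ 4 - n ^ 4)) / (l * m * n) ^ 2 := by
  set a : ℝ := 2 * n / (l * m) with ha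
  set b : ℝ := 2 * m / (l * n) with hb
  set c : ℝ := 2 * l / (m * n) with hc
  -- antisymmetry of the bracket
  have skew : ∀ v w, bracket w v = - bracket v w := by
    intro v w
    have h := halt (v + w)
    simp only [map_add, LinearMap.add_apply, halt, zero_add, add_zero] at h
    exact eq_neg_of_add_eq_zero_left h
  have bYX : bracket Y X = -(a • Z) := by rw [skew, hXY]
  have bXZ : bracket X Z = -(b • Y) := by rw [skew, hZX]
  have bZY : bracket Z Y = -(c • X) := by rw [skew, hYZ]
  -- the Christoffel symbols
  have nXX : nabla X X = (0 : ℝ) • X := by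
    have k0 := hKoszul X X X; have k1 := hKoszul X X Y; have k2 := hKoszul X X Z
    simp only [halt, hXY, bYX, hZX, bXZ, hYZ, bZY] at k0 k1 k2
    simp [hLor, hX, hY, hZ] at k0 k1 k2
    funext i; fin_cases i <;> simp [hX, hY, hZ] <;> linarith
  have nYY : nabla Y Y = (0 : ℝ) • X := by
    have k0 := hKoszul Y Y X; have k1 := hKoszul Y Y Y; have k2 := hKoszul Y Y Z
    simp only [halt, hXY, bYX, hZX, bXZ, hYZ, bZY] at k0 k1 k2
    simp [hLor, hX, hY, hZ] at k0 k1 k2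
    funext i; fin_cases i <;> simp [hX, hY, hZ] <;> linarith
  have nZZ : nabla Z Z = (0 : ℝ) • X := by
    have k0 := hKoszul Z Z X; have k1 := hKoszul Z Z Y; have k2 := hKoszul Z Z Z
    simp only [halt, hXY, bYX, hZX, bXZ, hYZ, bZY] at k0 k1 k2
    simp [hLor, hX, hY, hZ] at k0 k1 k2
    funext i; fin_cases i <;> simp [hX, hY, hZ] <;> linarith
  have nXY : nabla X Y = ((a + b + c) / 2) • Z := by
    have k0 := hKoszul X Y X; have k1 := hKoszul X Y Y; have k2 := hKoszul X Y Z
    simp only [halt, hXY, bYX, hZX, bXZ, hYZ, bZY] at k0 k1 k2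
    simp [hLor, hX, hY, hZ] at k0 k1 k2
    funext i; fin_cases i <;> simp [hX, hY, hZ] <;> linarith
  have nYX : nabla Y X = ((-a + b + c) / 2) • Z := by
    have k0 := hKoszul Y X X; have k1 := hKoszul Y X Y; have k2 := hKoszul Y X Z
    simp only [halt, hXY, bYX, hZX, bXZ, hYZ, bZY] at k0 k1 k2
    simp [hLor, hX, hY, hZ] at k0 k1 k2
    funext i; fin_cases i <;> simp [hX, hY, hZ] <;> linarith
  have nXZ : nabla X Z = (-(a + b + c) / 2) • Y := by
    have k0 := hKoszul X Z X; have k1 := hKoszul X Z Y; have k2 := hKoszul X Z Z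
    simp only [halt, hXY, bYX, hZX, bXZ, hYZ, bZY] at k0 k1 k2
    simp [hLor, hX, hY, hZ] at k0 k1 k2
    funext i; fin_cases i <;> simp [hX, hY, hZ] <;> linarith
  have nZX : nabla Z X = ((b - a - c) / 2) • Y := by
    have k0 := hKoszul Z X X; have k1 := hKoszul Z X Y; have k2 := hKoszul Z X Z
    simp only [halt, hXY, bYX, hZX, bXZ, hYZ, bZY] at k0 k1 k2
    simp [hLor, hX, hY, hZ] at k0 k1 k2
    funext i; fin_cases i <;> simp [hX, hY, hZ] <;> linarith
  have nYZ : nabla Y Z = ((b + c - a) / 2) • X := by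
    have k0 := hKoszul Y Z X; have k1 := hKoszul Y Z Y; have k2 := hKoszul Y Z Z
    simp only [halt, hXY, bYX, hZX, bXZ, hYZ, bZY] at k0 k1 k2
    simp [hLor, hX, hY, hZ] at k0 k1 k2
    funext i; fin_cases i <;> simp [hX, hY, hZ] <;> linarith
  have nZY : nabla Z Y = ((b - a - c) / 2) • X := by
    have k0 := hKoszul Z Y X; have k1 := hKoszul Z Y Y; have k2 := hKoszul Z Y Z
    simp only [halt, hXY, bYX, hZX, bXZ, hYZ, bZY] at k0 k1 k2
    simp [hLor, hX, hY, hZ] at k0 k1 k2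
    funext i; fin_cases i <;> simp [hX, hY, hZ] <;> linarith
  -- curvature values
  have e1 : R X Y Y = (-((a + b + c) / 2 * ((b + c - a) / 2)) - a * ((b - a - c) / 2)) • X := by
    simp only [hR, hXY, map_smul, LinearMap.map_smul₂, LinearMap.smul_apply,
      nYY, nXY, nYZ, nZY]
    module
  have e2 : R X Z Z = ((a + b + c) / 2 * ((b - a - c) / 2) + b * ((b + c - a) / 2)) • X := by
    simp only [hR, bXZ, map_smul, map_neg, LinearMap.map_smul₂, LinearMap.smul_apply,
      LinearMap.neg_apply, LinearMap.map_neg₂, nZZ, nXZ, nZY, nYZ]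
    module
  have e3 : R Y Z Z = (-((b + c - a) / 2 * ((b - a - c) / 2)) + c * ((a + b + c) / 2)) • Y := by
    simp only [hR, hYZ, map_smul, LinearMap.map_smul₂, LinearMap.smul_apply,
      nZZ, nYZ, nZX, nXZ]
    module
  have hl' := hl.ne'
  have hm' := hm.ne'
  have hn' := hn.ne'
  have hhX : ∀ s : ℝ, hLor (s • X) X = -s := by
    intro s; simp [hLor, hX]
  have hhY : ∀ s : ℝ, hLor (s • Y) Y = s := by
    intro s; simp [hLor, hY]
  refine ⟨?_, ?_, ?_⟩
  · rw [e1, hhX, ha, hb, hc]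
    field_simp
    ring
  · rw [e2, hhX, ha, hb, hc]
    field_simp
    ring
  · rw [e3, hhY, ha, hb, hc]
    field_simp
    ring
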